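/- arXiv:1712.03356 — 2 statements merged into one kernel-verified Lean document; each statement's English description precedes it below -/
import Mathlib

section
/- The representation of S_n on the subspace H^mult_μ of tensors of index-multiset type μ in (ℂ^n)^{⊗k} is isomorphic to (k!/∏_i (i!)^{m_i} m_i!) copies of the induced representation Ind_{S_l × S_{n−l}}^{S_n}(Reg_l × Id_{n−l}), where μ = (1^{m_1}2^{m_2}…), l = ∑ m_i, Reg_l is the regular representation of S_l, and Id_{n−l} is the trivial representation of S_{n−l}. -/
open Finset

/-- The multiset of multiplicities of the values of `f : Fin k → Fin n`. -/
def fiberType (n k : ℕ) (f : Fin k → Fin n) : Multiset ℕ :=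
  (Finset.univ.image f).val.map fun v => (Finset.univ.filter fun x => f x = v).card

/-- The subspace `H^mult_μ ⊆ (ℂ^n)^{⊗k}` spanned by the basis tensors whose index
multiset has type `μ`. -/
noncomputable def Hmult (n k : ℕ) (μ : Nat.Partition k) :
    Submodule ℂ ((Fin k → Fin n) → ℂ) :=
  Submodule.span ℂ {x | ∃ f : Fin k → Fin n, fiberType n k f = μ.parts ∧ x = Pi.single f 1}

section aux
open Equiv Function

variable {α β : Type*} [Fintype α] [DecidableEq α] [DecidableEq β]

/-- fiber cardinality -/
def fib (f : α → β) (b : β) : ℕ := Fintype.card {x // f x = b}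

lemma fib_eq_filter (f : α → β) (b : β) :
    fib f b = (Finset.univ.filter fun x => f x = b).card := Fintype.card_subtype _

lemma fib_count (f : α → β) (b : β) :
    Multiset.count b (Multiset.map f Finset.univ.val) = fib f b := by
  rw [Multiset.count_map, fib_eq_filter]
  rw [show (Finset.univ.filter fun x => f x = b) = Finset.filter (fun a => b = f a) Finset.univ by
    simp [eq_comm]]
  rfl

/-- two functions with the same fiber cardinalities differ by a permutation -/
lemma exists_perm_comp (f g : α → β) (h : ∀ b, fib f b = fib g b) :
    ∃ σ : Equiv.Perm α, f ∘ σ = g := by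
  have e : ∀ b, {x // g x = b} ≃ {x // f x = b} := fun b =>
    Fintype.equivOfCardEq (by unfold fib at h; rw [h b])
  refine ⟨((sigmaFiberEquiv g).symm.trans (Equiv.sigmaCongrRight e)).trans (sigmaFiberEquiv f), ?_⟩
  funext x
  exact (e (g x) ⟨x, rfl⟩).2

/-- permutations preserving the fibers of `f` are products of fiberwise permutations -/
def stabEquiv [Fintype β] (f : α → β) :
    {σ : Equiv.Perm α // f ∘ ⇑σ = f} ≃ ∀ b : β, Equiv.Perm {x // f x = b} where
  toFun σ b :=
    { toFun := fun x => ⟨σ.1 x.1, by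
        have := congrFun σ.2 x.1; simp at this; rw [this, x.2]⟩
      invFun := fun x => ⟨σ.1.symm x.1, by
        have := congrFun σ.2 (σ.1.symm x.1); simp at this; rw [← this, x.2]⟩
      left_inv := fun x => Subtype.ext (σ.1.symm_apply_apply x.1)
      right_inv := fun x => Subtype.ext (σ.1.apply_symm_apply x.1) }
  invFun π :=
    ⟨((sigmaFiberEquiv f).symm.trans (Equiv.sigmaCongrRight π)).trans (sigmaFiberEquiv f),
      funext fun x => (π (f x) ⟨x, rfl⟩).2⟩
  left_inv σ := Subtype.ext (Equiv.ext fun x => rfl)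
  right_inv π := by
    funext b
    ext x
    obtain ⟨v, hv⟩ := x
    subst hv
    rfl

lemma card_stab [Fintype β] (f : α → β) :
    Nat.card {σ : Equiv.Perm α // f ∘ ⇑σ = f} = ∏ b : β, (fib f b).factorial := by
  rw [Nat.card_congr (stabEquiv f), Nat.card_pi]
  exact Finset.prod_congr rfl fun b _ => by
    rw [Nat.card_eq_fintype_card, Fintype.card_perm]; rfl

end aux

section ftlemmas
open Function

lemma fiberType_eq {n k : ℕ} (f : Fin k → Fin n) :
    fiberType n k f = (Finset.univ.image f).val.map (fib f) := by
  unfold fiberType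
  exact Multiset.map_congr rfl fun v _ => (fib_eq_filter f v).symm

lemma card_fiberType {n k : ℕ} (f : Fin k → Fin n) :
    Multiset.card (fiberType n k f) = (Finset.univ.image f).card := by
  rw [fiberType_eq, Multiset.card_map]; rfl

lemma fib_comp_inj {k m n : ℕ} (f : Fin k → Fin m) (e : Fin m → Fin n) (he : Injective e)
    (v : Fin m) : fib (e ∘ f) (e v) = fib f v :=
  Fintype.card_congr (Equiv.subtypeEquivRight fun x => by simp [he.eq_iff])

lemma fiberType_comp {k m n : ℕ} (f : Fin k → Fin m) (e : Fin m → Fin n) (he : Injective e) :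
    fiberType n k (e ∘ f) = fiberType m k f := by
  rw [fiberType_eq, fiberType_eq]
  rw [show Finset.univ.image (e ∘ f) = (Finset.univ.image f).image e by
    rw [Finset.image_image]]
  rw [Finset.image_val_of_injOn (he.injOn)]
  rw [Multiset.map_map]
  exact Multiset.map_congr rfl fun v _ => fib_comp_inj f e he v

lemma surj_of_fiberType {k l : ℕ} (f : Fin k → Fin l)
    (h : Multiset.card (fiberType l k f) = l) : Surjective f := by
  rw [card_fiberType] at h
  have himg : Finset.univ.image f = Finset.univ :=
    Finset.eq_univ_of_card _ (by rw [h]; simp)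
  intro b
  have : b ∈ Finset.univ.image f := himg ▸ Finset.mem_univ b
  obtain ⟨x, _, hx⟩ := Finset.mem_image.mp this
  exact ⟨x, hx⟩

lemma fiberType_of_surj {k l : ℕ} (f : Fin k → Fin l) (hs : Surjective f) :
    fiberType l k f = Multiset.map (fib f) Finset.univ.val := by
  rw [fiberType_eq, Finset.eq_univ_of_forall fun b => Finset.mem_image.mpr
    ⟨(hs b).choose, Finset.mem_univ _, (hs b).choose_spec⟩]

lemma exists_fun_multiset {α : Type*} (m : Multiset α) :
    ∃ a : Fin (Multiset.card m) → α, Multiset.map a Finset.univ.val = m := by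
  induction m using Quotient.inductionOn with
  | h L =>
    exact ⟨fun j => L.get j, by
      rw [Fin.univ_val_map]
      exact congrArg (fun l : List α => (↑l : Multiset α)) (List.ofFn_get L)⟩

lemma exists_base {k l : ℕ} (μ : Nat.Partition k) (hl : l = Multiset.card μ.parts) :
    ∃ f : Fin k → Fin l, fiberType l k f = μ.parts := by
  subst hl
  obtain ⟨a, ha⟩ := exists_fun_multiset μ.parts
  have hsum : ∑ j, a j = k := by
    have h2 : ∑ j, a j = (Multiset.map a Finset.univ.val).sum := rfl
    rw [h2, ha, μ.parts_sum]
  have E : (Σ j, Fin (a j)) ≃ Fin k :=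
    Fintype.equivFinOfCardEq (by simp [hsum])
  refine ⟨fun x => (E.symm x).1, ?_⟩
  have hfib : ∀ b, fib (fun x => (E.symm x).1) b = a b := by
    intro b
    have e1 : {x : Fin k // (E.symm x).1 = b} ≃ {p : Σ j, Fin (a j) // p.1 = b} :=
      (Equiv.subtypeEquiv E.symm fun x => Iff.rfl)
    have e2 : {p : Σ j, Fin (a j) // p.1 = b} ≃ Fin (a b) :=
      { toFun := fun p => Fin.cast (congrArg a p.2) p.1.2
        invFun := fun y => ⟨⟨b, y⟩, rfl⟩
        left_inv := by rintro ⟨⟨j, y⟩, rfl⟩; rfl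
        right_inv := fun y => rfl }
    rw [fib, Fintype.card_congr (e1.trans e2), Fintype.card_fin]
  have hsurj : Surjective fun x => (E.symm x).1 := by
    intro b
    have hpos : 0 < a b := by
      have : a b ∈ μ.parts := ha ▸ Multiset.mem_map.mpr ⟨b, Finset.mem_univ b, rfl⟩
      exact μ.parts_pos this
    have : 0 < fib (fun x => (E.symm x).1) b := by rw [hfib]; exact hpos
    obtain ⟨⟨x, hx⟩⟩ := Fintype.card_pos_iff.mp this
    exact ⟨x, hx⟩
  rw [fiberType_of_surj _ hsurj]
  exact (Multiset.map_congr rfl fun b _ => hfib b).trans ha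

end ftlemmas

section counting
open Function Equiv MulAction

variable {k l : ℕ}

instance permProdSMul : SMul (Equiv.Perm (Fin k) × Equiv.Perm (Fin l)) (Fin k → Fin l) :=
  ⟨fun p f => ⇑p.2 ∘ f ∘ ⇑p.1⁻¹⟩

lemma permProd_smul_def (p : Equiv.Perm (Fin k) × Equiv.Perm (Fin l)) (f : Fin k → Fin l) :
    p • f = ⇑p.2 ∘ f ∘ ⇑p.1⁻¹ := rfl

instance permProdAction : MulAction (Equiv.Perm (Fin k) × Equiv.Perm (Fin l)) (Fin k → Fin l) where
  one_smul f := by funext x; rfl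
  mul_smul p q f := by
    funext x
    simp only [permProd_smul_def, Function.comp_apply, Prod.fst_mul, Prod.snd_mul,
      mul_inv_rev, Equiv.Perm.mul_apply]

lemma fib_precomp {k l : ℕ} (f : Fin k → Fin l) (σ : Equiv.Perm (Fin k)) (b : Fin l) :
    fib (f ∘ ⇑σ) b = fib f b :=
  Fintype.card_congr (σ.subtypeEquiv fun _ => Iff.rfl)

lemma fib_postcomp {k l : ℕ} (f : Fin k → Fin l) (τ : Equiv.Perm (Fin l)) (b : Fin l) :
    fib (⇑τ ∘ f) b = fib f (τ.symm b) :=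
  Fintype.card_congr (Equiv.subtypeEquivRight fun x => by
    simp [Function.comp, Equiv.apply_eq_iff_eq_symm_apply])

lemma fiberType_precomp {k l : ℕ} (f : Fin k → Fin l) (σ : Equiv.Perm (Fin k)) :
    fiberType l k (f ∘ ⇑σ) = fiberType l k f := by
  rw [fiberType_eq, fiberType_eq]
  have himg : Finset.univ.image (f ∘ ⇑σ) = Finset.univ.image f := by
    rw [show Finset.univ.image (f ∘ ⇑σ) = (Finset.univ.image ⇑σ).image f by
      rw [Finset.image_image], Finset.image_univ_equiv]
  rw [himg]
  exact Multiset.map_congr rfl fun v _ => by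
    rw [show fib (f ∘ ⇑σ) v = fib f v from fib_precomp f σ v]

lemma count_parts_eq {k l : ℕ} (μ : Nat.Partition k) (f : Fin k → Fin l)
    (hf : fiberType l k f = μ.parts) (hs : Surjective f) (i : ℕ) :
    fib (fib f) i = μ.parts.count i := by
  rw [← fib_count, ← hf, fiberType_of_surj f hs]

lemma parts_le {k : ℕ} (μ : Nat.Partition k) {i : ℕ} (hi : i ∈ μ.parts) : i ≤ k := by
  conv_rhs => rw [← μ.parts_sum]
  exact Multiset.single_le_sum (fun _ _ => Nat.zero_le _) i hi

lemma prod_fact_fib {k l : ℕ} (μ : Nat.Partition k) (f : Fin k → Fin l)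
    (hf : fiberType l k f = μ.parts) (hs : Surjective f) :
    ∏ b : Fin l, (fib f b).factorial
      = ∏ i ∈ Finset.range (k + 1), (Nat.factorial i) ^ μ.parts.count i := by
  have h1 : ∏ b : Fin l, (fib f b).factorial
      = (Multiset.map Nat.factorial (Multiset.map (fib f) Finset.univ.val)).prod := by
    rw [Multiset.map_map]; rfl
  rw [h1, ← fiberType_of_surj f hs, hf, Finset.prod_multiset_map_count]
  refine Finset.prod_subset (fun i hi => Finset.mem_range.mpr ?_) (fun i _ hi => ?_)
  · exact Nat.lt_succ_of_le (parts_le μ (Multiset.mem_toFinset.mp hi))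
  · rw [Multiset.count_eq_zero_of_notMem (fun h => hi (Multiset.mem_toFinset.mpr h)), pow_zero]

lemma card_X {k l : ℕ} (μ : Nat.Partition k) (hl : l = Multiset.card μ.parts) :
    Nat.card {f : Fin k → Fin l // fiberType l k f = μ.parts} *
      ∏ i ∈ Finset.range (k + 1),
        (Nat.factorial i ^ μ.parts.count i * Nat.factorial (μ.parts.count i))
      = Nat.factorial k * Nat.factorial l := by
  classical
  obtain ⟨f0, hf0⟩ := exists_base μ hl
  have hsurj0 : Surjective f0 := surj_of_fiberType f0 (by rw [hf0, hl])
  set G := Equiv.Perm (Fin k) × Equiv.Perm (Fin l) with hG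
  -- the orbit of f0 is the whole set
  have horbit : MulAction.orbit G f0 = {f | fiberType l k f = μ.parts} := by
    ext f
    constructor
    · rintro ⟨p, rfl⟩
      show fiberType l k (⇑p.2 ∘ f0 ∘ ⇑p.1⁻¹) = μ.parts
      rw [fiberType_comp _ _ p.2.injective,
        show f0 ∘ ⇑p.1⁻¹ = f0 ∘ ⇑(p.1⁻¹) from rfl, fiberType_precomp, hf0]
    · intro hf
      have hf' : fiberType l k f = μ.parts := hf
      have hsurjf : Surjective f := surj_of_fiberType f (by rw [hf', hl])
      have hcount : ∀ i : ℕ, fib (fib f0) i = fib (fib f) i := fun i => by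
        rw [count_parts_eq μ f0 hf0 hsurj0, count_parts_eq μ f hf' hsurjf]
      obtain ⟨τ0, hτ0⟩ := exists_perm_comp (fib f0) (fib f) hcount
      have hfib2 : ∀ j, fib (⇑τ0⁻¹ ∘ f0) j = fib f j := fun j => by
        rw [fib_postcomp f0 τ0⁻¹ j]
        show fib f0 (τ0 j) = fib f j
        exact congrFun hτ0 j
      obtain ⟨σ0, hσ0⟩ := exists_perm_comp (⇑τ0⁻¹ ∘ f0) f hfib2
      refine ⟨(σ0⁻¹, τ0⁻¹), ?_⟩
      show ⇑τ0⁻¹ ∘ f0 ∘ ⇑σ0⁻¹⁻¹ = f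
      rw [inv_inv]
      exact hσ0
  -- stabilizer analysis
  set H := MulAction.stabilizer G f0 with hH
  have hmem : ∀ p : G, p ∈ H ↔ ⇑p.2 ∘ f0 ∘ ⇑p.1⁻¹ = f0 := fun p => Iff.rfl
  set π : ↥H →* Equiv.Perm (Fin l) :=
    (MonoidHom.snd (Equiv.Perm (Fin k)) (Equiv.Perm (Fin l))).comp H.subtype with hπ
  -- kernel of π
  have eker : ↥π.ker ≃ {σ : Equiv.Perm (Fin k) // f0 ∘ ⇑σ = f0} := by
    refine
      { toFun := fun x => ⟨x.1.1.1⁻¹, ?_⟩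
        invFun := fun s => ⟨⟨(s.1⁻¹, 1), ?_⟩, ?_⟩
        left_inv := ?_
        right_inv := ?_ }
    · have h1 : ⇑x.1.1.2 ∘ f0 ∘ ⇑x.1.1.1⁻¹ = f0 := x.1.2
      have h2 : x.1.1.2 = 1 := x.2
      rw [h2] at h1
      exact h1
    · show ⇑(1 : Equiv.Perm (Fin l)) ∘ f0 ∘ ⇑s.1⁻¹⁻¹ = f0
      rw [inv_inv]
      exact s.2
    · rfl
    · rintro ⟨⟨⟨σ, τ⟩, hmem'⟩, hker⟩
      have hτ : τ = 1 := hker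
      subst hτ
      exact Subtype.ext (Subtype.ext (Prod.ext (inv_inv σ) rfl))
    · exact fun s => Subtype.ext (inv_inv s.1)
  -- range of π
  have erange : ↥π.range ≃ {τ : Equiv.Perm (Fin l) // fib f0 ∘ ⇑τ = fib f0} := by
    refine Equiv.subtypeEquivRight fun τ => ?_
    constructor
    · rintro ⟨⟨⟨σ, τ'⟩, hmem'⟩, rfl⟩
      have h1 : ⇑τ' ∘ f0 ∘ ⇑σ⁻¹ = f0 := hmem'
      funext j
      have h2 : ∀ b, fib f0 b = fib f0 (τ'.symm b) := fun b => by
        conv_lhs => rw [← h1]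
        rw [show ⇑τ' ∘ f0 ∘ ⇑σ⁻¹ = (⇑τ' ∘ f0) ∘ ⇑σ⁻¹ from rfl, fib_precomp, fib_postcomp]
      have := h2 (τ' j)
      simp only [Equiv.symm_apply_apply] at this
      exact this
    · intro h
      have hfib2 : ∀ j, fib (⇑τ ∘ f0) j = fib f0 j := fun j => by
        rw [fib_postcomp]
        have := congrFun h (τ.symm j)
        simp only [Function.comp_apply, Equiv.apply_symm_apply] at this
        exact this.symm
      obtain ⟨σ0, hσ0⟩ := exists_perm_comp (⇑τ ∘ f0) f0 hfib2
      refine ⟨⟨(σ0⁻¹, τ), ?_⟩, rfl⟩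
      show ⇑τ ∘ f0 ∘ ⇑σ0⁻¹⁻¹ = f0
      rw [inv_inv]
      exact hσ0
  -- cardinalities
  have hcard_ker : Nat.card ↥π.ker
      = ∏ i ∈ Finset.range (k + 1), (Nat.factorial i) ^ μ.parts.count i := by
    rw [Nat.card_congr eker, card_stab, prod_fact_fib μ f0 hf0 hsurj0]
  have hcard_range : Nat.card ↥π.range
      = ∏ i ∈ Finset.range (k + 1), Nat.factorial (μ.parts.count i) := by
    rw [Nat.card_congr erange]
    have hbd : ∀ j, fib f0 j < k + 1 := fun j => by
      rw [fib_eq_filter]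
      exact Nat.lt_succ_of_le ((Finset.card_filter_le _ _).trans (by simp))
    set a' : Fin l → Fin (k + 1) := fun j => ⟨fib f0 j, hbd j⟩ with ha'
    have e2 : {τ : Equiv.Perm (Fin l) // fib f0 ∘ ⇑τ = fib f0}
        ≃ {τ : Equiv.Perm (Fin l) // a' ∘ ⇑τ = a'} := by
      refine Equiv.subtypeEquivRight fun τ => ?_
      constructor
      · intro h
        funext j
        exact Fin.ext (congrFun h j)
      · intro h
        funext j
        exact congrArg Fin.val (congrFun h j)
    rw [Nat.card_congr e2, card_stab]
    have hfa : ∀ i : Fin (k + 1), fib a' i = μ.parts.count i.1 := by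
      intro i
      have e3 : {j // a' j = i} ≃ {j // fib f0 j = i.1} :=
        Equiv.subtypeEquivRight fun j => by
          constructor
          · intro h; exact congrArg Fin.val h
          · intro h; exact Fin.ext h
      rw [show fib a' i = Fintype.card {j // a' j = i} from rfl, Fintype.card_congr e3,
        show Fintype.card {j // fib f0 j = i.1} = fib (fib f0) i.1 from rfl,
        count_parts_eq μ f0 hf0 hsurj0]
    rw [Finset.prod_congr rfl fun i _ => by rw [hfa i]]
    exact Fin.prod_univ_eq_prod_range (fun i => Nat.factorial (μ.parts.count i)) (k + 1)
  have hstab : Nat.card ↥H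
      = (∏ i ∈ Finset.range (k + 1), Nat.factorial (μ.parts.count i)) *
        ∏ i ∈ Finset.range (k + 1), (Nat.factorial i) ^ μ.parts.count i := by
    rw [Subgroup.card_eq_card_quotient_mul_card_subgroup π.ker,
      Nat.card_congr (QuotientGroup.quotientKerEquivRange π).toEquiv, hcard_ker, hcard_range]
  have hGcard : Nat.card G = Nat.factorial k * Nat.factorial l := by
    rw [hG, Nat.card_prod, Nat.card_eq_fintype_card, Nat.card_eq_fintype_card,
      Fintype.card_perm, Fintype.card_perm, Fintype.card_fin, Fintype.card_fin]
  have horbcard : Nat.card ↥(MulAction.orbit G f0)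
      = Nat.card {f : Fin k → Fin l // fiberType l k f = μ.parts} := by
    rw [horbit]; rfl
  have hmain : Nat.card G = Nat.card ↥(MulAction.orbit G f0) * Nat.card ↥H := by
    rw [Subgroup.card_eq_card_quotient_mul_card_subgroup H]
    congr 1
    exact Nat.card_congr (MulAction.orbitEquivQuotientStabilizer G f0).symm
  rw [Finset.prod_mul_distrib]
  rw [← hGcard, hmain, horbcard, hstab]
  ring

end counting

section decomp
open Function Equiv MulAction

/-- functions of fiber type `μ` -/
abbrev XT (k l : ℕ) (μ : Nat.Partition k) := {f : Fin k → Fin l // fiberType l k f = μ.parts}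

instance XTsmul (k l : ℕ) (μ : Nat.Partition k) : SMul (Equiv.Perm (Fin l)) (XT k l μ) :=
  ⟨fun τ f => ⟨⇑τ ∘ f.1, by rw [fiberType_comp _ _ τ.injective, f.2]⟩⟩

lemma XT_smul_val {k l : ℕ} {μ : Nat.Partition k} (τ : Equiv.Perm (Fin l)) (f : XT k l μ) :
    (τ • f).1 = ⇑τ ∘ f.1 := rfl

instance XTaction (k l : ℕ) (μ : Nat.Partition k) : MulAction (Equiv.Perm (Fin l)) (XT k l μ) where
  one_smul f := Subtype.ext rfl
  mul_smul τ σ f := Subtype.ext rfl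

lemma XT_surj {k l : ℕ} {μ : Nat.Partition k} (hl : l = Multiset.card μ.parts) (f : XT k l μ) :
    Surjective f.1 := surj_of_fiberType f.1 (by rw [f.2, hl])

lemma XT_free {k l : ℕ} {μ : Nat.Partition k} (hl : l = Multiset.card μ.parts)
    {τ : Equiv.Perm (Fin l)} {f : XT k l μ} (h : τ • f = f) : τ = 1 := by
  have h1 : ⇑τ ∘ f.1 = f.1 := congrArg Subtype.val h
  refine Equiv.ext fun b => ?_
  obtain ⟨x, rfl⟩ := XT_surj hl f b
  simpa using congrFun h1 x

/-- `XT ≃ (orbit space) × S_l` -/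
lemma card_XT {k l : ℕ} (μ : Nat.Partition k) (hl : l = Multiset.card μ.parts) :
    Nat.card (XT k l μ)
      = Nat.card (Quotient (MulAction.orbitRel (Equiv.Perm (Fin l)) (XT k l μ)))
        * Nat.factorial l := by
  classical
  letI s := MulAction.orbitRel (Equiv.Perm (Fin l)) (XT k l μ)
  have e : (Quotient s × Equiv.Perm (Fin l)) ≃ XT k l μ := by
    refine Equiv.ofBijective (fun p => p.2 • p.1.out) ⟨?_, ?_⟩
    · rintro ⟨q, τ⟩ ⟨q', τ'⟩ hp
      simp only at hp
      have hrel : q.out ≈ q'.out := by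
        show q.out ∈ MulAction.orbit (Equiv.Perm (Fin l)) q'.out
        exact MulAction.mem_orbit_iff.mpr ⟨τ⁻¹ * τ', by rw [mul_smul, ← hp, ← mul_smul,
          inv_mul_cancel, one_smul]⟩
      have hq : q = q' := by
        rw [← Quotient.out_eq q, ← Quotient.out_eq q']
        exact Quotient.sound hrel
      subst hq
      have hτ : τ'⁻¹ * τ = 1 := XT_free hl (f := q.out) (by rw [mul_smul, hp, ← mul_smul,
        inv_mul_cancel, one_smul])
      have : τ = τ' := by
        have := congrArg (τ' * ·) hτ
        simpa [← mul_assoc] using this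
      rw [this]
    · intro f
      have hrel := Quotient.mk_out (s := s) f
      obtain ⟨τ, hτ⟩ := MulAction.mem_orbit_iff.mp hrel
      refine ⟨(⟦f⟧, τ⁻¹), ?_⟩
      show τ⁻¹ • (Quotient.mk s f).out = f
      rw [← hτ, ← mul_smul, inv_mul_cancel, one_smul]
  rw [← Nat.card_congr e, Nat.card_prod, Nat.card_eq_fintype_card (α := Equiv.Perm (Fin l)),
    Fintype.card_perm, Fintype.card_fin, mul_comm]

lemma exists_perm_of_ker {k l : ℕ} (f₀ g₀ : Fin k → Fin l) (hf : Surjective f₀)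
    (hker : ∀ x y, f₀ x = f₀ y ↔ g₀ x = g₀ y) : ∃ τ : Equiv.Perm (Fin l), ⇑τ ∘ f₀ = g₀ := by
  have hru : ∀ b, f₀ (surjInv hf b) = b := fun b => surjInv_eq hf b
  have hinj : Injective (g₀ ∘ surjInv hf) := by
    intro j j' h
    have := (hker _ _).mpr h
    rwa [hru, hru] at this
  refine ⟨Equiv.ofBijective _ (Finite.injective_iff_bijective.mp hinj), funext fun x => ?_⟩
  show g₀ (surjInv hf (f₀ x)) = g₀ x
  exact (hker _ _).mp (hru (f₀ x))

lemma exists_factor {k l n : ℕ} (f : Fin k → Fin n) (hcard : (Finset.univ.image f).card = l) :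
    ∃ (f₀ : Fin k → Fin l) (φ : Fin l ↪ Fin n), f = ⇑φ ∘ f₀ ∧ Surjective f₀ := by
  set o := (Finset.univ.image f).orderIsoOfFin hcard with ho
  refine ⟨fun x => o.symm ⟨f x, Finset.mem_image_of_mem f (Finset.mem_univ x)⟩,
    ⟨fun j => (o j).1, fun j j' h => o.injective (Subtype.ext h)⟩, funext fun x => ?_, fun j => ?_⟩
  · have h1 : (o (o.symm ⟨f x, Finset.mem_image_of_mem f (Finset.mem_univ x)⟩)).1 = f x := by
      rw [OrderIso.apply_symm_apply]
    exact h1.symm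
  · have : (o j).1 ∈ Finset.univ.image f := (o j).2
    obtain ⟨x, _, hx⟩ := Finset.mem_image.mp this
    refine ⟨x, ?_⟩
    show o.symm ⟨f x, _⟩ = j
    rw [show (⟨f x, Finset.mem_image_of_mem f (Finset.mem_univ x)⟩ :
      {y // y ∈ Finset.univ.image f}) = o j from Subtype.ext hx, OrderIso.symm_apply_apply]

lemma image_card_of_fiberType {k l n : ℕ} (μ : Nat.Partition k) (f : Fin k → Fin n)
    (hf : fiberType n k f = μ.parts) (hl : l = Multiset.card μ.parts) :
    (Finset.univ.image f).card = l := by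
  rw [← card_fiberType, hf, hl]

/-- the master bijection -/
lemma theta_bijective {k l n : ℕ} (μ : Nat.Partition k) (hl : l = Multiset.card μ.parts) :
    Function.Bijective
      (fun p : Quotient (MulAction.orbitRel (Equiv.Perm (Fin l)) (XT k l μ)) × (Fin l ↪ Fin n) =>
        (⟨⇑p.2 ∘ p.1.out.1, by
          rw [fiberType_comp _ _ p.2.injective, p.1.out.2]⟩ :
          {f : Fin k → Fin n // fiberType n k f = μ.parts})) := by
  classical
  letI s := MulAction.orbitRel (Equiv.Perm (Fin l)) (XT k l μ)
  constructor
  · rintro ⟨q, φ⟩ ⟨q', φ'⟩ hp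
    have hval : ⇑φ ∘ q.out.1 = ⇑φ' ∘ q'.out.1 := congrArg Subtype.val hp
    have hker : ∀ x y, q.out.1 x = q.out.1 y ↔ q'.out.1 x = q'.out.1 y := by
      intro x y
      rw [← φ.injective.eq_iff, ← φ'.injective.eq_iff]
      have hx := congrFun hval x
      have hy := congrFun hval y
      simp only [Function.comp_apply] at hx hy
      rw [hx, hy]
    obtain ⟨τ, hτ⟩ := exists_perm_of_ker _ _ (XT_surj hl q.out) hker
    have hrel : q'.out ≈ q.out := by
      show q'.out ∈ MulAction.orbit (Equiv.Perm (Fin l)) q.out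
      exact MulAction.mem_orbit_iff.mpr ⟨τ, Subtype.ext hτ⟩
    have hq : q' = q := by
      rw [← Quotient.out_eq q, ← Quotient.out_eq q']
      exact Quotient.sound hrel
    subst hq
    suffices hφ : φ = φ' by rw [hφ]
    ext j
    obtain ⟨x, rfl⟩ := XT_surj hl q'.out j
    exact congrArg Fin.val (by simpa using congrFun hval x)
  · rintro ⟨f, hf⟩
    obtain ⟨f₀, φ, hfac, hsurj⟩ :=
      exists_factor f (image_card_of_fiberType μ f hf hl)
    have hf₀ : fiberType l k f₀ = μ.parts := by
      rw [← fiberType_comp f₀ φ φ.injective, ← hfac, hf]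
    set F : XT k l μ := ⟨f₀, hf₀⟩ with hF
    have hrel := Quotient.mk_out (s := s) F
    obtain ⟨τ, hτ⟩ := MulAction.mem_orbit_iff.mp hrel
    refine ⟨(⟦F⟧, (τ⁻¹.toEmbedding).trans φ), Subtype.ext ?_⟩
    show ⇑φ ∘ ⇑τ⁻¹ ∘ (Quotient.mk s F).out.1 = f
    have hout : (Quotient.mk s F).out.1 = ⇑τ ∘ f₀ := by rw [← hτ]; rfl
    rw [hout, hfac]
    funext x
    simp only [Function.comp_apply, Equiv.Perm.inv_def, Equiv.symm_apply_apply]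

lemma exists_theta {k l n : ℕ} (μ : Nat.Partition k) (hl : l = Multiset.card μ.parts) :
    ∃ θ : Quotient (MulAction.orbitRel (Equiv.Perm (Fin l)) (XT k l μ)) × (Fin l ↪ Fin n) →
        {f : Fin k → Fin n // fiberType n k f = μ.parts},
      Function.Bijective θ ∧ ∀ p, (θ p).1 = ⇑p.2 ∘ p.1.out.1 :=
  ⟨_, theta_bijective μ hl, fun _ => rfl⟩

end decomp

section spanlemmas

variable {n k : ℕ} {μ : Nat.Partition k}

lemma mem_Hmult_vanish {x : (Fin k → Fin n) → ℂ} (hx : x ∈ Hmult n k μ)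
    {f : Fin k → Fin n} (hf : fiberType n k f ≠ μ.parts) : x f = 0 := by
  induction hx using Submodule.span_induction with
  | mem y hy =>
    obtain ⟨g, hg, rfl⟩ := hy
    exact Pi.single_eq_of_ne (fun h => hf (by rw [h]; exact hg)) 1
  | zero => rfl
  | add y z _ _ hy hz => show y f + z f = 0; rw [hy, hz, add_zero]
  | smul a y _ hy => show a * y f = 0; rw [hy, mul_zero]

lemma vanish_mem_Hmult {x : (Fin k → Fin n) → ℂ}
    (hx : ∀ f, fiberType n k f ≠ μ.parts → x f = 0) : x ∈ Hmult n k μ := by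
  classical
  have hrepr : x = ∑ f : Fin k → Fin n, x f • (Pi.single f 1 : (Fin k → Fin n) → ℂ) := by
    conv_lhs => rw [pi_eq_sum_univ x]
    refine Finset.sum_congr rfl fun f _ => ?_
    congr 1
    funext j
    rw [Pi.single_apply]
    exact if_congr eq_comm rfl rfl
  rw [hrepr]
  refine Submodule.sum_mem _ fun f _ => ?_
  by_cases h : fiberType n k f = μ.parts
  · refine Submodule.smul_mem _ _ (Submodule.subset_span ?_)
    exact ⟨f, h, rfl⟩
  · rw [hx f h, zero_smul]
    exact Submodule.zero_mem _

end spanlemmas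

/-- The `S_n`-representation on `H^mult_μ` is isomorphic to
`(k!/∏_i (i!)^{m_i} m_i!)` copies of `Ind_{S_l × S_{n-l}}^{S_n}(Reg_l × Id_{n-l})`,
where `l = l(μ)`.  The induced representation is modelled concretely as the
permutation module `ℂ[Inj(Fin l, Fin n)]` on injections (= `ℂ[S_n] ⊗_{S_l × S_{n-l}}
(ℂ[S_l] ⊠ triv)`), with `S_n` acting by postcomposition `φ ↦ g ∘ φ`.  The
multiplicity `c = k!/∏_i (i!)^{m_i} m_i!` is specified division-free by `hc`. -/
theorem stmt2 (n k : ℕ) (μ : Nat.Partition k) (l : ℕ) (hl : l = μ.parts.card)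
    (hln : l ≤ n) (c : ℕ)
    (hc : c * ∏ i ∈ Finset.range (k + 1),
        (Nat.factorial i ^ μ.parts.count i * Nat.factorial (μ.parts.count i))
      = Nat.factorial k) :
    ∃ e : ↥(Hmult n k μ) ≃ₗ[ℂ] (Fin c → (Fin l ↪ Fin n) → ℂ),
      ∀ (g : Equiv.Perm (Fin n)) (x y : ↥(Hmult n k μ)),
        ((y : (Fin k → Fin n) → ℂ) = fun f => (x : (Fin k → Fin n) → ℂ) (⇑g⁻¹ ∘ f)) →
        ∀ (j : Fin c) (φ : Fin l ↪ Fin n),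
          e y j φ = e x j (φ.trans g⁻¹.toEmbedding) := by
  classical
  have hl' : l = Multiset.card μ.parts := hl
  letI s := MulAction.orbitRel (Equiv.Perm (Fin l)) (XT k l μ)
  letI : Fintype (Quotient s) := Fintype.ofFinite _
  set P : ℕ := ∏ i ∈ Finset.range (k + 1),
    (Nat.factorial i ^ μ.parts.count i * Nat.factorial (μ.parts.count i)) with hP
  have hPpos : 0 < P :=
    Finset.prod_pos fun i _ =>
      Nat.mul_pos (pow_pos (Nat.factorial_pos i) _) (Nat.factorial_pos _)
  have h1 := card_X μ hl'
  have h2 := card_XT μ hl'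
  have hK : Nat.card (Quotient s) = c := by
    have h3 : Nat.card (Quotient s) * P * Nat.factorial l
        = Nat.factorial k * Nat.factorial l := by
      rw [show Nat.card (Quotient s) * P * Nat.factorial l
          = Nat.card (Quotient s) * Nat.factorial l * P by ring, ← h2, hP, h1]
    have h4 : Nat.card (Quotient s) * P = Nat.factorial k :=
      Nat.eq_of_mul_eq_mul_right (Nat.factorial_pos l) h3
    have h5 : Nat.card (Quotient s) * P = c * P := by rw [h4, ← hc, hP]
    exact Nat.eq_of_mul_eq_mul_right hPpos h5
  have eK : Quotient s ≃ Fin c :=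
    Fintype.equivFinOfCardEq (by rw [← Nat.card_eq_fintype_card, hK])
  obtain ⟨θ, hbij, hθ⟩ := exists_theta (n := n) μ hl'
  set E1 : (Fin c × (Fin l ↪ Fin n)) ≃ {f : Fin k → Fin n // fiberType n k f = μ.parts} :=
    (Equiv.prodCongr eK.symm (Equiv.refl _)).trans (Equiv.ofBijective θ hbij) with hE1def
  have hE1 : ∀ (j : Fin c) (φ : Fin l ↪ Fin n),
      (E1 (j, φ)).1 = ⇑φ ∘ (Quotient.out (eK.symm j)).1 := fun j φ => hθ (eK.symm j, φ)
  refine ⟨{ toFun := fun x j φ => x.1 (E1 (j, φ)).1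
            map_add' := fun x y => rfl
            map_smul' := fun a x => rfl
            invFun := fun y =>
              ⟨fun f => if h : fiberType n k f = μ.parts
                  then y (E1.symm ⟨f, h⟩).1 (E1.symm ⟨f, h⟩).2 else 0,
                vanish_mem_Hmult fun f hf => dif_neg hf⟩
            left_inv := ?_
            right_inv := ?_ }, ?_⟩
  · intro x
    refine Subtype.ext (funext fun f => ?_)
    show (if h : fiberType n k f = μ.parts
        then x.1 (E1 ((E1.symm ⟨f, h⟩).1, (E1.symm ⟨f, h⟩).2)).1 else 0) = x.1 f
    by_cases h : fiberType n k f = μ.parts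
    · rw [dif_pos h]
      have he : E1 ((E1.symm ⟨f, h⟩).1, (E1.symm ⟨f, h⟩).2) = ⟨f, h⟩ := by
        rw [Prod.mk.eta]
        exact E1.apply_symm_apply _
      exact congrArg x.1 (congrArg Subtype.val he)
    · rw [dif_neg h]
      exact (mem_Hmult_vanish x.2 h).symm
  · intro y
    funext j φ
    show (if h : fiberType n k (E1 (j, φ)).1 = μ.parts
        then y (E1.symm ⟨(E1 (j, φ)).1, h⟩).1 (E1.symm ⟨(E1 (j, φ)).1, h⟩).2 else 0) = y j φ
    rw [dif_pos (E1 (j, φ)).2]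
    have he : (⟨(E1 (j, φ)).1, (E1 (j, φ)).2⟩ :
        {f : Fin k → Fin n // fiberType n k f = μ.parts}) = E1 (j, φ) := rfl
    rw [he, E1.symm_apply_apply]
  · intro g x y hxy j φ
    show y.1 (E1 (j, φ)).1 = x.1 (E1 (j, φ.trans g⁻¹.toEmbedding)).1
    rw [hxy]
    refine congrArg x.1 ?_
    rw [hE1 j φ, hE1 j (φ.trans g⁻¹.toEmbedding)]
    rfl
end

section
/- Let T be a standard Young tableau of shape ν ⊢ k with column antisymmetrizer b_T = ∑_{σ ∈ C(T)} sgn(σ)σ, and let {T'} be a tabloid of shape μ ⊢ k. If ν does not dominate μ, then there exist two entries lying in the same row of T' and in the same column of T; consequently {T'}·b_T = 0. -/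
open Finset

/-- The parts of a partition as a list, sorted in decreasing order. -/
def sortedParts {k : ℕ} (μ : Nat.Partition k) : List ℕ :=
  (μ.parts.sort (· ≤ ·)).reverse

/-- `T : Fin k → ℕ × ℕ` is a (bijective) filling of the Young diagram with row
lengths given by the list `P`: cells are pairs `(row, column)` (0-indexed). -/
def IsShape (k : ℕ) (P : List ℕ) (T : Fin k → ℕ × ℕ) : Prop :=
  Function.Injective T ∧ Set.range T = {c : ℕ × ℕ | c.2 < P.getD c.1 0}

/-- `T` is standard: entries increase along each row and down each column. -/
def IsStandard (k : ℕ) (T : Fin k → ℕ × ℕ) : Prop :=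
  (∀ x y : Fin k, (T x).1 = (T y).1 → (T x).2 < (T y).2 → x < y) ∧
  (∀ x y : Fin k, (T x).2 = (T y).2 → (T x).1 < (T y).1 → x < y)

/-- The column stabilizer `C(T)` of a filling `T`. -/
def colStab (k : ℕ) (T : Fin k → ℕ × ℕ) : Finset (Equiv.Perm (Fin k)) :=
  Finset.univ.filter fun σ => ∀ x, (T (σ x)).2 = (T x).2

/-- Sum of the `i` largest parts of a multiset of natural numbers. -/
def largestSum (m : Multiset ℕ) (i : ℕ) : ℕ :=
  ((m.sort (· ≤ ·)).drop (Multiset.card m - i)).sum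

/-- The dominance order on partitions of `k`: `ν ⊵ μ`. -/
def Dominates {k : ℕ} (ν μ : Nat.Partition k) : Prop :=
  ∀ i, largestSum μ.parts i ≤ largestSum ν.parts i

lemma take_sum_eq (l : List ℕ) (i : ℕ) :
    (l.take i).sum = ∑ j ∈ Finset.range i, l.getD j 0 := by
  induction l generalizing i with
  | nil => simp
  | cons a l ih =>
    cases i with
    | zero => simp
    | succ n =>
      rw [Finset.sum_range_succ']
      simp [ih]
      omega

lemma largestSum_eq (m : Multiset ℕ) (i : ℕ) :
    largestSum m i = ∑ j ∈ Finset.range i, ((m.sort (· ≤ ·)).reverse).getD j 0 := by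
  rw [← take_sum_eq]
  have h := List.reverse_take (l := (m.sort (· ≤ ·)).reverse) (i := i)
  rw [List.reverse_reverse] at h
  have h2 : ((m.sort (· ≤ ·)).reverse.take i).sum
      = (((m.sort (· ≤ ·)).reverse.take i).reverse).sum := (List.sum_reverse _).symm
  rw [h2, h, List.length_reverse, Multiset.length_sort]
  rfl

lemma largestSum_eq' {k : ℕ} (μ : Nat.Partition k) (i : ℕ) :
    largestSum μ.parts i = ∑ j ∈ Finset.range i, (sortedParts μ).getD j 0 :=
  largestSum_eq _ _

lemma sortedParts_sorted {k : ℕ} (ν : Nat.Partition k) :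
    (sortedParts ν).Pairwise (· ≥ ·) := by
  have : (ν.parts.sort (· ≤ ·)).Pairwise (· ≤ ·) := Multiset.pairwise_sort ..
  exact List.pairwise_reverse.mpr this

lemma getD_antitone {l : List ℕ} (h : l.Pairwise (· ≥ ·)) {a b : ℕ} (hab : a ≤ b) :
    l.getD b 0 ≤ l.getD a 0 := by
  by_cases hb : b < l.length
  · have ha : a < l.length := lt_of_le_of_lt hab hb
    rw [List.getD_eq_getElem _ _ hb, List.getD_eq_getElem _ _ ha]
    rcases eq_or_lt_of_le hab with rfl | h'
    · exact le_refl _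
    · exact List.pairwise_iff_get.mp h ⟨a, ha⟩ ⟨b, hb⟩ h'
  · rw [List.getD_eq_default _ _ (le_of_not_gt hb)]
    exact Nat.zero_le _

/-- Key combinatorial lemma for upper triangularity.  Let `T` be a standard Young
tableau of shape `ν ⊢ k` and let `{T'}` be a tabloid of shape `μ ⊢ k`, encoded by
its row function `r : Fin k → ℕ` (entry `x` lies in row `r x`, rows having sizes
`μ_0 ≥ μ_1 ≥ …`).  If `ν` does not dominate `μ`, then some two entries lie in the
same row of `T'` and in the same column of `T`; consequently
`{T'}·b_T = ∑_{σ ∈ C(T)} sgn(σ) {σ T'} = 0` in the free `ℂ`-module on tabloids. -/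
theorem stmt3 (k : ℕ) (μ ν : Nat.Partition k)
    (T : Fin k → ℕ × ℕ) (hT : IsShape k (sortedParts ν) T) (hstd : IsStandard k T)
    (r : Fin k → ℕ)
    (hr : ∀ i, (Finset.univ.filter fun x => r x = i).card = (sortedParts μ).getD i 0)
    (hdom : ¬ Dominates ν μ) :
    (∃ x y : Fin k, x ≠ y ∧ r x = r y ∧ (T x).2 = (T y).2) ∧
    (∑ σ ∈ colStab k T,
        ((Equiv.Perm.sign σ : ℤ) : ℂ) • Finsupp.single (r ∘ ⇑σ⁻¹) (1 : ℂ))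
      = (0 : (Fin k → ℕ) →₀ ℂ) := by
  set P : List ℕ := sortedParts ν with hP
  have hPs : P.Pairwise (· ≥ ·) := sortedParts_sorted ν
  have hTinj : Function.Injective T := hT.1
  have hcell : ∀ x, (T x).2 < P.getD (T x).1 0 := by
    intro x
    have : T x ∈ Set.range T := ⟨x, rfl⟩
    rw [hT.2] at this
    exact this
  have hsurj : ∀ c : ℕ × ℕ, c.2 < P.getD c.1 0 → ∃ x, T x = c := by
    intro c hc
    have : c ∈ Set.range T := by rw [hT.2]; exact hc
    exact this
  -- Part 1
  have part1 : ∃ x y : Fin k, x ≠ y ∧ r x = r y ∧ (T x).2 = (T y).2 := by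
    by_contra hcon
    push_neg at hcon
    have H : ∀ x y : Fin k, r x = r y → (T x).2 = (T y).2 → x = y := by
      intro x y h1 h2
      by_contra hne
      exact hcon x y hne h1 h2
    apply hdom
    intro i
    -- row fiber counts for T
    have hrow : ∀ j, (univ.filter fun x : Fin k => (T x).1 = j).card = P.getD j 0 := by
      intro j
      rw [← Finset.card_range (P.getD j 0)]
      apply Finset.card_bij (fun x _ => (T x).2)
      · intro x hx
        simp only [mem_filter, mem_univ, true_and] at hx
        have := hcell x
        rw [hx] at this
        simpa using this
      · intro x hx y hy hxy
        simp only [mem_filter, mem_univ, true_and] at hx hy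
        apply hTinj
        exact Prod.ext (hx.trans hy.symm) hxy
      · intro b hb
        simp only [mem_range] at hb
        obtain ⟨x, hx⟩ := hsurj (j, b) (by simpa using hb)
        exact ⟨x, by simp [mem_filter, hx], by simp [hx]⟩
    -- column fiber counts for T
    have hcolcard : ∀ c, (univ.filter fun x : Fin k => (T x).2 = c).card
        = ((range P.length).filter fun a => c < P.getD a 0).card := by
      intro c
      apply Finset.card_bij (fun x _ => (T x).1)
      · intro x hx
        simp only [mem_filter, mem_univ, true_and] at hx
        have h1 := hcell x
        rw [hx] at h1
        simp only [mem_filter, mem_range]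
        constructor
        · by_contra hlen
          push_neg at hlen
          rw [List.getD_eq_default _ _ hlen] at h1
          omega
        · exact h1
      · intro x hx y hy hxy
        simp only [mem_filter, mem_univ, true_and] at hx hy
        apply hTinj
        exact Prod.ext hxy (hx.trans hy.symm)
      · intro a ha
        simp only [mem_filter, mem_range] at ha
        obtain ⟨x, hx⟩ := hsurj (a, c) (by simpa using ha.2)
        exact ⟨x, by simp [mem_filter, hx], by simp [hx]⟩
    -- downward closedness
    have hdc : ∀ c j, j < ((range P.length).filter fun a => c < P.getD a 0).card
        → c < P.getD j 0 := by
      intro c j hj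
      by_contra hc
      push_neg at hc
      have hsub : ((range P.length).filter fun a => c < P.getD a 0) ⊆ range j := by
        intro a ha
        simp only [mem_filter, mem_range] at ha ⊢
        by_contra hja
        push_neg at hja
        have := getD_antitone hPs hja
        omega
      have := Finset.card_le_card hsub
      rw [Finset.card_range] at this
      omega
    -- the rank function
    set J : Fin k → ℕ := fun x =>
      (univ.filter fun y : Fin k => r y < i ∧ (T y).2 = (T x).2 ∧ r y < r x).card with hJ
    have hJlt : ∀ x : Fin k, J x < ((range P.length).filter
        fun a => (T x).2 < P.getD a 0).card := by
      intro x
      rw [← hcolcard]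
      apply Finset.card_lt_card
      constructor
      · intro y hy
        simp only [mem_filter, mem_univ, true_and] at hy ⊢
        exact hy.2.1
      · intro hsub
        have hx : x ∈ univ.filter fun y : Fin k => (T y).2 = (T x).2 := by
          simp
        have := hsub hx
        simp only [mem_filter, mem_univ, true_and] at this
        omega
    have hex : ∀ x : Fin k, ∃ z, T z = (J x, (T x).2) := by
      intro x
      exact hsurj _ (hdc _ _ (hJlt x))
    choose φ hφ using hex
    -- J x ≤ r x
    have hJle : ∀ x : Fin k, J x ≤ r x := by
      intro x
      rw [hJ]
      calc (univ.filter fun y : Fin k => r y < i ∧ (T y).2 = (T x).2 ∧ r y < r x).card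
          ≤ (range (r x)).card := by
            apply Finset.card_le_card_of_injOn r
            · intro y hy
              simp only [coe_filter, Set.mem_setOf_eq, mem_filter, mem_univ, true_and] at hy
              simp [hy.2.2]
            · intro y1 hy1 y2 hy2 hr12
              simp only [coe_filter, Set.mem_setOf_eq, mem_univ, true_and] at hy1 hy2
              exact H _ _ hr12 (hy1.2.1.trans hy2.2.1.symm)
        _ = r x := Finset.card_range _
    -- counting
    have hμ : largestSum μ.parts i = (univ.filter fun x : Fin k => r x < i).card := by
      rw [largestSum_eq' μ i]
      rw [Finset.card_eq_sum_card_fiberwise (f := r) (t := range i)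
        (fun x hx => by simpa using (mem_filter.mp hx).2)]
      apply Finset.sum_congr rfl
      intro j hj
      rw [← hr j]
      simp only [Finset.mem_range] at hj
      congr 1
      ext x
      simp only [mem_filter, mem_univ, true_and]
      omega
    have hν : largestSum ν.parts i = (univ.filter fun x : Fin k => (T x).1 < i).card := by
      rw [largestSum_eq' ν i]
      rw [Finset.card_eq_sum_card_fiberwise (f := fun x => (T x).1) (t := range i)
        (fun x hx => by simpa using (mem_filter.mp hx).2)]
      apply Finset.sum_congr rfl
      intro j hj
      rw [← hrow j]
      simp only [Finset.mem_range] at hj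
      congr 1
      ext x
      simp only [mem_filter, mem_univ, true_and]
      omega
    rw [hμ, hν]
    apply Finset.card_le_card_of_injOn φ
    · intro x hx
      simp only [coe_filter, Set.mem_setOf_eq, mem_filter, mem_univ, true_and] at hx ⊢
      rw [hφ x]
      exact lt_of_le_of_lt (hJle x) hx
    · intro x1 hx1 x2 hx2 heq
      simp only [coe_filter, Set.mem_setOf_eq, mem_univ, true_and] at hx1 hx2
      by_contra hne
      have hT12 : (J x1, (T x1).2) = ((J x2 : ℕ), (T x2).2) := by
        rw [← hφ x1, ← hφ x2, heq]
      obtain ⟨hJ12, hc2⟩ := Prod.mk.inj hT12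
      have hrne : r x1 ≠ r x2 := fun h => hne (H _ _ h hc2)
      -- wlog r x1 < r x2
      rcases lt_or_gt_of_ne hrne with hlt | hlt
      · have : J x1 < J x2 := by
          apply Finset.card_lt_card
          constructor
          · intro y hy
            simp only [mem_filter, mem_univ, true_and] at hy ⊢
            exact ⟨hy.1, hy.2.1.trans hc2, hy.2.2.trans hlt⟩
          · intro hsub
            have hx1m : x1 ∈ univ.filter
                fun y : Fin k => r y < i ∧ (T y).2 = (T x2).2 ∧ r y < r x2 := by
              simp only [mem_filter, mem_univ, true_and]
              exact ⟨hx1, hc2, hlt⟩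
            have := hsub hx1m
            simp only [mem_filter, mem_univ, true_and] at this
            omega
        omega
      · have : J x2 < J x1 := by
          apply Finset.card_lt_card
          constructor
          · intro y hy
            simp only [mem_filter, mem_univ, true_and] at hy ⊢
            exact ⟨hy.1, hy.2.1.trans hc2.symm, hy.2.2.trans hlt⟩
          · intro hsub
            have hx2m : x2 ∈ univ.filter
                fun y : Fin k => r y < i ∧ (T y).2 = (T x1).2 ∧ r y < r x1 := by
              simp only [mem_filter, mem_univ, true_and]
              exact ⟨hx2, hc2.symm, hlt⟩
            have := hsub hx2m
            simp only [mem_filter, mem_univ, true_and] at this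
            omega
        omega
  -- Part 2
  refine ⟨part1, ?_⟩
  obtain ⟨x, y, hxy, hrxy, hcxy⟩ := part1
  set τ : Equiv.Perm (Fin k) := Equiv.swap x y with hτ
  have hrτ : ∀ w, r (τ w) = r w := by
    intro w
    rw [hτ, Equiv.swap_apply_def]
    split_ifs with h1 h2
    · rw [h1, hrxy]
    · rw [h2, hrxy]
    · rfl
  have hTτ : ∀ w, (T (τ w)).2 = (T w).2 := by
    intro w
    rw [hτ, Equiv.swap_apply_def]
    split_ifs with h1 h2
    · rw [h1, hcxy]
    · rw [h2, hcxy]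
    · rfl
  apply Finset.sum_involution (g := fun σ _ => σ * τ)
  · intro σ hσ
    have h1 : ((Equiv.Perm.sign (σ * τ) : ℤ) : ℂ) = -((Equiv.Perm.sign σ : ℤ) : ℂ) := by
      rw [map_mul, hτ, Equiv.Perm.sign_swap hxy]
      push_cast
      ring
    have h2 : r ∘ ⇑(σ * τ)⁻¹ = r ∘ ⇑σ⁻¹ := by
      funext z
      simp only [Function.comp_apply, mul_inv_rev, Equiv.Perm.mul_apply]
      rw [show τ⁻¹ = τ by rw [hτ, Equiv.swap_inv]]
      exact hrτ _
    rw [h1, h2, neg_smul, add_neg_cancel]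
  · intro σ hσ _
    intro h
    apply hxy
    have hτ1 : τ = 1 := mul_eq_left.mp h
    rw [hτ] at hτ1
    exact Equiv.swap_eq_one_iff.mp hτ1
  · intro σ hσ
    simp only [colStab, mem_filter, mem_univ, true_and] at hσ ⊢
    intro z
    rw [Equiv.Perm.mul_apply, hσ (τ z), hTτ z]
  · intro σ hσ
    rw [mul_assoc, hτ, Equiv.swap_mul_self, mul_one]
end
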